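/- For every string S ∈ Σ^n \ H_{n,k} (note that then also cyc(S) ∈ Σ^n \ H_{n,k}), it holds that f_c(cyc(S)) = rot_n(f_c(S)). -/

import Mathlib

open Finset
open scoped Classical

noncomputable section

variable {α : Type*}

/-- `i ↻ n`: 1-indexed wrap-around of an (integer) position. -/
def zwrap (n : ℕ) (i : ℤ) : ℕ := ((i - 1) % (n : ℤ)).toNat + 1

/-- `S*[i]`: the infinite cyclic extension of the length-`n` string `S` (1-indexed). -/
def cext (n : ℕ) (S : ℕ → α) (i : ℕ) : α := S ((i - 1) % n + 1)

/-- The fragment `S*[a..]`, i.e. the string `w` with `w[j] = S*[a+j-1]`. -/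
def frag (n : ℕ) (S : ℕ → α) (a : ℕ) : ℕ → α := fun j => cext n S (a + j - 1)

/-- Hamming distance restricted to positions `[a..b]` (1-indexed strings). -/
def hamIcc (a b : ℕ) (S T : ℕ → α) : ℕ := ((Finset.Icc a b).filter fun j => S j ≠ T j).card

/-- Hamming distance between two length-`n` strings. -/
def ham (n : ℕ) (S T : ℕ → α) : ℕ := hamIcc 1 n S T

/-- `p` is a period of the length-`L` string `w` (1-indexed). -/
def IsPeriod (L : ℕ) (w : ℕ → α) (p : ℕ) : Prop :=
  1 ≤ p ∧ ∀ j, 1 ≤ j → j + p ≤ L → w j = w (j + p)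

/-- `per(w)`: the shortest period of the length-`L` string `w`. -/
def per (L : ℕ) (w : ℕ → α) : ℕ := sInf {p | IsPeriod L w p}

/-- `root(S)`: the length of the primitive root of the length-`n` string `S`,
i.e. the least length of a string `Q` with `S = Q^α`. -/
def root (n : ℕ) (S : ℕ → α) : ℕ := sInf {r | r ∣ n ∧ IsPeriod n S r}

/-- `S` is `(a,b)`-pseudo-periodic: it has an `(a,b)`-base. -/
def PseudoPeriodic (n : ℕ) (a b : ℝ) (S : ℕ → α) : Prop :=
  ∃ S' : ℕ → α, (root n S' : ℝ) ≤ (n : ℝ) / a ∧ (ham n S S' : ℝ) ≤ b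

/-- `cyc(S)`: left cyclic rotation, `cyc(S)[i] = S*[i+1]`. -/
def cyc (n : ℕ) (S : ℕ → α) : ℕ → α := fun i => cext n S (i + 1)

/-- `cyc^m(S)` for an integer `m`: `cyc^m(S)[i] = S*[i+m]` (cyclically). -/
def cycZ (n : ℕ) (m : ℤ) (S : ℕ → α) : ℕ → α := fun i => S (zwrap n ((i : ℤ) + m))

/-- `rot_n(P) = {(i-1) ↻ n : i ∈ P}`. -/
def rotSet (n : ℕ) (P : Finset ℕ) : Finset ℕ := P.image fun i => zwrap n ((i : ℤ) - 1)

/-- `ρ_{S,i} = per(S*[i..i+3ℓ-1])`. -/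
def rho (n ℓ : ℕ) (S : ℕ → α) (i : ℕ) : ℕ := per (3 * ℓ) (frag n S i)

/-- `μ_{S,i}*`: the infinite periodic extension of `μ_{S,i} = S*[i..i+ρ_{S,i}-1]` (1-indexed). -/
def muExt (n ℓ : ℕ) (S : ℕ → α) (i : ℕ) : ℕ → α :=
  fun j => cext n S (i + (j - 1) % rho n ℓ S i)

/-- `P(S)`: the set of cubic positions of `S`. -/
def cubicSet (n ℓ : ℕ) (S : ℕ → α) : Finset ℕ :=
  (Finset.Icc 1 n).filter fun i => rho n ℓ S i ≤ ℓ

/-- The defining set of `τ_{S,i}`: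
`{τ ≥ 1 : τ < (n/(γk))·Ham(S*[i..i+τ-1], μ_{S,i}*[1..τ])}`. -/
def tauSet (n ℓ k : ℕ) (γ : ℝ) (S : ℕ → α) (i : ℕ) : Set ℕ :=
  {τ | 1 ≤ τ ∧ (τ : ℝ) < (n : ℝ) / (γ * k) * (hamIcc 1 τ (frag n S i) (muExt n ℓ S i) : ℝ)}

/-- `τ_{S,i}`. -/
def tau (n ℓ k : ℕ) (γ : ℝ) (S : ℕ → α) (i : ℕ) : ℕ := sInf (tauSet n ℓ k γ S i)

/-- `R_{S,i} = [i..i+τ_{S,i}-1]`. -/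
def Rset (n ℓ k : ℕ) (γ : ℝ) (S : ℕ → α) (i : ℕ) : Finset ℕ :=
  Finset.Icc i (i + tau n ℓ k γ S i - 1)

/-- `M_{S,i} = {j ∈ R_{S,i} : S*[j] ≠ μ_{S,i}*[j-i+1]}`. -/
def Mset (n ℓ k : ℕ) (γ : ℝ) (S : ℕ → α) (i : ℕ) : Finset ℕ :=
  (Rset n ℓ k γ S i).filter fun j => cext n S j ≠ muExt n ℓ S i (j - i + 1)

/-- `A_{S,i} = {j ∈ R_{S,i} : [j..j+2ℓ-1] ⊆ R_{S,i} \ M_{S,i}}`. -/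
def Aset (n ℓ k : ℕ) (γ : ℝ) (S : ℕ → α) (i : ℕ) : Finset ℕ :=
  (Rset n ℓ k γ S i).filter fun j =>
    Finset.Icc j (j + 2 * ℓ - 1) ⊆ Rset n ℓ k γ S i \ Mset n ℓ k γ S i

/-- `f_c(S) = ∪_{i ∈ P(S)} {j ↻ n : j ∈ M_{S,i}}`. -/
def fc (n ℓ k : ℕ) (γ : ℝ) (S : ℕ → α) : Finset ℕ :=
  (cubicSet n ℓ S).biUnion fun i => (Mset n ℓ k γ S i).image fun j => zwrap n (j : ℤ)

section AuxLemmas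

variable {n ℓ k : ℕ} {γ : ℝ} {S : ℕ → α}

lemma cext_add_n {m : ℕ} (hm : 1 ≤ m) : cext n S (m + n) = cext n S m := by
  unfold cext
  have h : m + n - 1 = (m - 1) + n := by omega
  rw [h, Nat.add_mod_right]

lemma cext_cyc (hn1 : 1 ≤ n) {m : ℕ} (hm : 1 ≤ m) :
    cext n (cyc n S) m = cext n S (m + 1) := by
  show S _ = S _
  congr 1
  have h1 : (m - 1) % n + 1 + 1 - 1 = (m - 1) % n + 1 := by omega
  rw [h1, Nat.mod_add_mod]
  have h2 : m - 1 + 1 = m + 1 - 1 := by omega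
  rw [h2]

lemma frag_cyc (hn1 : 1 ≤ n) {i j : ℕ} (hi : 1 ≤ i) (hj : 1 ≤ j) :
    frag n (cyc n S) i j = frag n S (i + 1) j := by
  unfold frag
  rw [cext_cyc hn1 (by omega)]
  congr 1
  omega

lemma frag_add_n {i j : ℕ} (hi : 1 ≤ i) (hj : 1 ≤ j) :
    frag n S (i + n) j = frag n S i j := by
  unfold frag
  have h : i + n + j - 1 = (i + j - 1) + n := by omega
  rw [h, cext_add_n (by omega)]

lemma isPeriod_congr {L : ℕ} {w w' : ℕ → α} (h : ∀ j, 1 ≤ j → j ≤ L → w j = w' j) (p : ℕ) :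
    IsPeriod L w p ↔ IsPeriod L w' p := by
  unfold IsPeriod
  constructor <;> rintro ⟨hp, hw⟩ <;> refine ⟨hp, fun j hj hjp => ?_⟩
  · rw [← h j hj (by omega), ← h (j + p) (by omega) hjp]; exact hw j hj hjp
  · rw [h j hj (by omega), h (j + p) (by omega) hjp]; exact hw j hj hjp

lemma per_congr {L : ℕ} {w w' : ℕ → α} (h : ∀ j, 1 ≤ j → j ≤ L → w j = w' j) :
    per L w = per L w' := by
  unfold per
  congr 1
  ext p
  exact isPeriod_congr h p

lemma rho_cyc (hn1 : 1 ≤ n) {i : ℕ} (hi : 1 ≤ i) :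
    rho n ℓ (cyc n S) i = rho n ℓ S (i + 1) := by
  unfold rho
  exact per_congr fun j hj _ => frag_cyc hn1 hi hj

lemma rho_add_n {i : ℕ} (hi : 1 ≤ i) : rho n ℓ S (i + n) = rho n ℓ S i := by
  unfold rho
  exact per_congr fun j hj _ => frag_add_n hi hj

lemma muExt_cyc (hn1 : 1 ≤ n) {i : ℕ} (hi : 1 ≤ i) (j : ℕ) :
    muExt n ℓ (cyc n S) i j = muExt n ℓ S (i + 1) j := by
  unfold muExt
  rw [rho_cyc hn1 hi, cext_cyc hn1 (by omega)]
  congr 1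
  omega

lemma muExt_add_n {i : ℕ} (hi : 1 ≤ i) (j : ℕ) :
    muExt n ℓ S (i + n) j = muExt n ℓ S i j := by
  unfold muExt
  rw [rho_add_n hi]
  have h : i + n + (j - 1) % rho n ℓ S i = (i + (j - 1) % rho n ℓ S i) + n := by omega
  rw [h, cext_add_n (by omega)]

lemma hamIcc_congr {τ : ℕ} {w w' v v' : ℕ → α}
    (h1 : ∀ j, 1 ≤ j → j ≤ τ → w j = w' j) (h2 : ∀ j, 1 ≤ j → j ≤ τ → v j = v' j) :
    hamIcc 1 τ w v = hamIcc 1 τ w' v' := by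
  unfold hamIcc
  congr 1
  apply Finset.filter_congr
  intro j hj
  rw [Finset.mem_Icc] at hj
  rw [h1 j hj.1 hj.2, h2 j hj.1 hj.2]

lemma tau_cyc (hn1 : 1 ≤ n) {i : ℕ} (hi : 1 ≤ i) :
    tau n ℓ k γ (cyc n S) i = tau n ℓ k γ S (i + 1) := by
  unfold tau tauSet
  congr 1
  ext τ
  simp only [Set.mem_setOf_eq]
  rw [hamIcc_congr (fun j hj _ => frag_cyc hn1 hi hj)
    (fun j _ _ => muExt_cyc hn1 hi j)]

lemma tau_add_n {i : ℕ} (hi : 1 ≤ i) :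
    tau n ℓ k γ S (i + n) = tau n ℓ k γ S i := by
  unfold tau tauSet
  congr 1
  ext τ
  simp only [Set.mem_setOf_eq]
  rw [hamIcc_congr (fun j hj _ => frag_add_n hi hj)
    (fun j _ _ => muExt_add_n hi j)]

lemma mem_Mset_ge {i j : ℕ} (hj : j ∈ Mset n ℓ k γ S i) : i ≤ j := by
  simp only [Mset, Rset, Finset.mem_filter, Finset.mem_Icc] at hj
  exact hj.1.1

lemma Mset_cyc (hn1 : 1 ≤ n) {i : ℕ} (hi : 1 ≤ i) (j : ℕ) :
    j ∈ Mset n ℓ k γ (cyc n S) i ↔ j + 1 ∈ Mset n ℓ k γ S (i + 1) := by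
  simp only [Mset, Rset, Finset.mem_filter, Finset.mem_Icc, tau_cyc hn1 hi]
  constructor
  · rintro ⟨⟨h1, h2⟩, h3⟩
    refine ⟨⟨by omega, by omega⟩, ?_⟩
    have hj1 : 1 ≤ j := le_trans hi h1
    rw [← cext_cyc hn1 hj1]
    have harg : j + 1 - (i + 1) + 1 = j - i + 1 := by omega
    rw [harg, ← muExt_cyc hn1 hi]
    exact h3
  · rintro ⟨⟨h1, h2⟩, h3⟩
    have h1' : i ≤ j := by omega
    refine ⟨⟨h1', by omega⟩, ?_⟩
    have hj1 : 1 ≤ j := le_trans hi h1'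
    rw [cext_cyc hn1 hj1, muExt_cyc hn1 hi]
    have harg : j - i + 1 = j + 1 - (i + 1) + 1 := by omega
    rw [harg]
    exact h3

lemma Mset_add_n (hn1 : 1 ≤ n) {i : ℕ} (hi : 1 ≤ i) (j : ℕ) :
    j + n ∈ Mset n ℓ k γ S (i + n) ↔ j ∈ Mset n ℓ k γ S i := by
  simp only [Mset, Rset, Finset.mem_filter, Finset.mem_Icc, tau_add_n hi]
  constructor
  · rintro ⟨⟨h1, h2⟩, h3⟩
    refine ⟨⟨by omega, by omega⟩, ?_⟩
    have hj1 : 1 ≤ j := by omega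
    have harg : j + n - (i + n) + 1 = j - i + 1 := by omega
    rw [harg, muExt_add_n hi, cext_add_n hj1] at h3
    exact h3
  · rintro ⟨⟨h1, h2⟩, h3⟩
    refine ⟨⟨by omega, by omega⟩, ?_⟩
    have hj1 : 1 ≤ j := le_trans hi h1
    have harg : j + n - (i + n) + 1 = j - i + 1 := by omega
    rw [harg, muExt_add_n hi, cext_add_n hj1]
    exact h3

lemma zwrap_add_n {a : ℤ} : zwrap n (a + n) = zwrap n a := by
  unfold zwrap
  have h : a + n - 1 = (a - 1) + (n : ℤ) * 1 := by ring
  rw [h, Int.add_mul_emod_self_left]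

lemma zwrap_sub_n {a : ℤ} : zwrap n (a - n) = zwrap n a := by
  have h := zwrap_add_n (n := n) (a := a - n)
  rw [sub_add_cancel] at h
  exact h.symm

lemma zwrap_pred (hn1 : 1 ≤ n) (a : ℤ) :
    zwrap n ((zwrap n a : ℤ) - 1) = zwrap n (a - 1) := by
  have hn0 : (n : ℤ) ≠ 0 := Int.natCast_ne_zero.mpr (by omega)
  have hnonneg : 0 ≤ (a - 1) % (n : ℤ) := Int.emod_nonneg _ hn0
  have hcast : (zwrap n a : ℤ) = (a - 1) % (n : ℤ) + 1 := by
    unfold zwrap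
    push_cast
    rw [Int.toNat_of_nonneg hnonneg]
  rw [hcast]
  unfold zwrap
  congr 2
  have h1 : (a - 1) % (n : ℤ) + 1 - 1 = (a - 1) % (n : ℤ) := by ring
  rw [h1, Int.sub_emod, Int.emod_emod_of_dvd _ dvd_rfl, ← Int.sub_emod]

end AuxLemmas

/-- For every `S ∈ Σ^n \ H_{n,k}`, `f_c(cyc(S)) = rot_n(f_c(S))`. -/
theorem stmt10 {α : Type*} (n k ℓ : ℕ) (γ : ℝ)
    (hk1 : 1 ≤ k) (hkn : k ≤ n) (hγ : 14 ≤ γ) (hℓ1 : 1 ≤ ℓ)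
    (hn : (n : ℝ) = 3 * γ * k * ℓ)
    (S : ℕ → α) (hS : ¬ PseudoPeriodic n (3 * γ * k) (γ * k) S) :
    fc n ℓ k γ (cyc n S) = rotSet n (fc n ℓ k γ S) := by
  have hn1 : 1 ≤ n := le_trans hk1 hkn
  have hrho_n : rho n ℓ (cyc n S) n = rho n ℓ S 1 := by
    rw [rho_cyc hn1 hn1, show n + 1 = 1 + n from by omega, rho_add_n le_rfl]
  ext x
  simp [fc, rotSet, cubicSet]
  constructor
  · rintro ⟨i, ⟨⟨hi1, hin⟩, hcub⟩, j, hj, rfl⟩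
    have hij : i ≤ j := mem_Mset_ge hj
    by_cases hie : i = n
    · subst hie
      have hj1 : j + 1 ∈ Mset i ℓ k γ S (i + 1) := (Mset_cyc hn1 hi1 j).mp hj
      rw [show i + 1 = 1 + i from by omega,
        show j + 1 = (j + 1 - i) + i from by omega] at hj1
      have hj0 : j + 1 - i ∈ Mset i ℓ k γ S 1 := (Mset_add_n hn1 le_rfl _).mp hj1
      refine ⟨1, j + 1 - i, ⟨⟨⟨le_rfl, hn1⟩, by rw [← hrho_n]; exact hcub⟩, hj0⟩, ?_⟩
      rw [zwrap_pred hn1,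
        show ((j + 1 - i : ℕ) : ℤ) - 1 = ((j : ℤ) - i) from by omega, zwrap_sub_n]
    · have hj1 : j + 1 ∈ Mset n ℓ k γ S (i + 1) := (Mset_cyc hn1 hi1 j).mp hj
      refine ⟨i + 1, j + 1, ⟨⟨⟨by omega, by omega⟩, by rw [← rho_cyc hn1 hi1]; exact hcub⟩,
          hj1⟩, ?_⟩
      rw [zwrap_pred hn1]
      congr 1
      push_cast
      ring
  · rintro ⟨i', j', ⟨⟨⟨hi'1, hi'n⟩, hcub⟩, hj'⟩, rfl⟩
    rw [zwrap_pred hn1]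
    have hij' : i' ≤ j' := mem_Mset_ge hj'
    by_cases hi'e : i' = 1
    · subst hi'e
      refine ⟨n, ⟨⟨hn1, le_rfl⟩, by rw [hrho_n]; exact hcub⟩, j' + n - 1, ?_, ?_⟩
      · refine (Mset_cyc hn1 hn1 _).mpr ?_
        rw [show j' + n - 1 + 1 = j' + n from by omega,
          show n + 1 = 1 + n from by omega]
        exact (Mset_add_n hn1 le_rfl j').mpr hj'
      · rw [show ((j' + n - 1 : ℕ) : ℤ) = ((j' : ℤ) - 1) + n from by omega,
          zwrap_add_n]
    · refine ⟨i' - 1, ⟨⟨by omega, by omega⟩, ?_⟩, j' - 1, ?_, ?_⟩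
      · rw [rho_cyc hn1 (by omega), show i' - 1 + 1 = i' from by omega]
        exact hcub
      · refine (Mset_cyc hn1 (by omega) _).mpr ?_
        rw [show j' - 1 + 1 = j' from by omega, show i' - 1 + 1 = i' from by omega]
        exact hj'
      · congr 1
        omega
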